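/- arXiv:1111.6559 — 4 statements merged into one kernel-verified Lean document; each statement's English description precedes it below -/
import Mathlib

section
/- Let d, q ∈ ℕ, let L, L′ ∈ ℕ with L′ ≤ L/λ(q), let x ∈ ℤ, let B ⊆ [1, L], and let B′ ⊆ {ℓ ∈ [1, L′] : x + ℓ·λ(q) ∈ B}. Then R_{qd}(B′, L′) ≤ R_d(B, L). -/
open Polynomial Real Set MeasureTheory Filter

noncomputable section

/-- A polynomial `h ∈ ℤ[x]` is `ℙ`-intersective if for every `q ∈ ℕ` it has a root
modulo `q` which is coprime to `q`. -/
def PIntersective (h : Polynomial ℤ) : Prop :=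
  ∀ q : ℕ, 0 < q → ∃ r : ℤ, Int.gcd r q = 1 ∧ (q : ℤ) ∣ h.eval r

/-- The auxiliary data attached to a `ℙ`-intersective polynomial `h`, arising from the
choice, for each prime `p`, of a `p`-adic root `z_p` of `h` which is a unit in `ℤ_p`:
the completely multiplicative function `λ` (with `λ(p) = p^{m_p}`, `m_p` the multiplicity
of `z_p`) and the coherent choice of roots `r_d ∈ (-d, 0]` (via CRT from the `z_p`). -/
structure AuxData (h : Polynomial ℤ) where
  lam : ℕ → ℕ
  r : ℕ → ℤ
  lam_pos : ∀ d : ℕ, 0 < lam d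
  lam_one : lam 1 = 1
  lam_mul : ∀ m n : ℕ, lam (m * n) = lam m * lam n
  r_lt : ∀ d : ℕ, 0 < d → -(d : ℤ) < r d
  r_nonpos : ∀ d : ℕ, 0 < d → r d ≤ 0
  r_coprime : ∀ d : ℕ, 0 < d → Int.gcd (r d) d = 1
  r_dvd : ∀ d : ℕ, 0 < d → (d : ℤ) ∣ h.eval (r d)
  r_compat : ∀ d q : ℕ, 0 < d → 0 < q → (d : ℤ) ∣ r (q * d) - r d
  lam_dvd : ∀ d : ℕ, 0 < d → ∀ n : ℤ, (lam d : ℤ) ∣ h.eval (r d + d * n)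

variable {h : Polynomial ℤ}

/-- The auxiliary polynomial `h_d(x) = h(r_d + dx)/λ(d)`, as a function on `ℤ`. -/
def hAux (A : AuxData h) (d : ℕ) (n : ℤ) : ℤ :=
  h.eval (A.r d + d * n) / A.lam d

/-- The auxiliary polynomial `h_d`, as a function on `ℝ`. -/
def hAuxR (A : AuxData h) (d : ℕ) (x : ℝ) : ℝ :=
  (Polynomial.aeval ((A.r d : ℝ) + d * x)) h / A.lam d

/-- `s = 2^k + 6`. -/
def sconst (k : ℕ) : ℕ := 2 ^ k + 6

/-- `K = 2^(10k)`. -/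
def Kconst (k : ℕ) : ℕ := 2 ^ (10 * k)

/-- The leading coefficient `b_d = d^k b / λ(d)` of `h_d`, as a real number. -/
def bAux (A : AuxData h) (k d : ℕ) : ℝ :=
  (d : ℝ) ^ k * (h.leadingCoeff : ℝ) / A.lam d

/-- `M_d(L) = (L/(s b_d))^{1/k}`. -/
def Md (A : AuxData h) (k d L : ℕ) : ℝ :=
  ((L : ℝ) / (sconst k * bAux A k d)) ^ ((k : ℝ)⁻¹)

/-- `H_d(L) = {x ∈ ℕ : 0 < h_d(x) < L/s}`. -/
def Hd (A : AuxData h) (k d L : ℕ) : Set ℕ :=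
  {y | 0 < hAux A d y ∧ (hAux A d y : ℝ) < (L : ℝ) / sconst k}

/-- The weight `ν_d(x) = (φ(d)/d) log(r_d + dx)` if `r_d + dx` is prime, and `0` otherwise. -/
def nu (A : AuxData h) (d : ℕ) (x : ℕ) : ℝ :=
  if (A.r d + d * x).toNat.Prime then
    ((d : ℕ).totient / d : ℝ) * Real.log ((A.r d + d * (x : ℤ) : ℤ) : ℝ)
  else 0

/-- The weighted count `R_d(B, L) = Σ_{x ∈ ℤ, y ∈ H_d(L)} 1_B(x) 1_B(x + h_d(y)) ν_d(y)`. -/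
def Rd (A : AuxData h) (k d L : ℕ) (B : Set ℤ) : ℝ :=
  ∑' x : ℤ, ∑' y : ℕ,
    B.indicator (fun _ => (1 : ℝ)) x * B.indicator (fun _ => (1 : ℝ)) (x + hAux A d y) *
      (Hd A k d L).indicator (fun _ => (1 : ℝ)) y * nu A d y

/-- `ψ(X, a, q) = Σ_{p ≤ X, p ≡ a (q)} log p`. -/
def psiAP (X : ℝ) (a : ℤ) (q : ℕ) : ℝ :=
  ∑' p : ℕ, if p.Prime ∧ (p : ℝ) ≤ X ∧ (p : ℤ) ≡ a [ZMOD (q : ℤ)] then Real.log p else 0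

/-- `Ψ_d(L) = (φ(d)/d) ψ(d M_d(L), r_d, d)`. -/
def PsiD (A : AuxData h) (k d L : ℕ) : ℝ :=
  (d.totient / d : ℝ) * psiAP ((d : ℝ) * Md A k d L) (A.r d) d

/-- `Q(δ) = exp(C₀ δ^{-(k+ε-1)})`. -/
def Qfun (C₀ ε : ℝ) (k : ℕ) (δ : ℝ) : ℝ :=
  Real.exp (C₀ * δ ^ (-((k : ℝ) + ε - 1)))

/-- The exponential sum `S_M(α) = Σ_{1 ≤ x ≤ M} ν_d(x) e^{2πi h_d(x) α}`. -/
def SM (A : AuxData h) (d : ℕ) (M : ℝ) (α : ℝ) : ℂ :=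
  ∑' x : ℕ, if 1 ≤ x ∧ (x : ℝ) ≤ M then
    (nu A d x : ℂ) * Complex.exp (2 * Real.pi * Complex.I * (hAux A d x : ℂ) * (α : ℂ))
  else 0

/-- The Gauss-type sum `G(a, q) = Σ_{0 ≤ ℓ < q, (r_d + dℓ, q) = 1} e^{2πi h_d(ℓ) a/q}`. -/
def Gsum (A : AuxData h) (d q : ℕ) (a : ℤ) : ℂ :=
  ∑ l ∈ Finset.range q, if Int.gcd (A.r d + d * l) q = 1 then
    Complex.exp (2 * Real.pi * Complex.I * (hAux A d (l : ℤ) : ℂ) * a / q)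
  else 0

/-- The Ruzsa–Sanders dichotomy hypothesis: data `q₀`, `ρ`, `χ` satisfying the exceptional /
unexceptional asymptotic for `ψ(X, a, q)`. -/
def RSHyp (N k : ℕ) (c₁ C₁ Qδ : ℝ) (q₀ : ℕ) (ρ : ℝ)
    (χ : DirichletCharacter ℂ q₀) : Prop :=
  (q₀ : ℝ) ≤ Qδ ^ (3 * Kconst k) ∧ (1 / 2 : ℝ) ≤ ρ ∧ ρ < 1 ∧
    (1 - ρ)⁻¹ ≤ C₁ * q₀ ∧
    ∀ (X : ℝ) (q : ℕ) (a : ℤ),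
      (N : ℝ) ^ (1 / (10 * (k : ℝ))) ≤ X → q₀ ∣ q →
      (q : ℝ) ≤ ((q₀ : ℝ) * Qδ) ^ (3 * Kconst k) → Int.gcd a q = 1 →
      ‖(psiAP X a q : ℂ) - (X : ℂ) / (q.totient : ℂ)
          + χ (a : ZMod q₀) * ((X ^ ρ : ℝ) : ℂ) / ((q.totient : ℂ) * (ρ : ℂ))‖
        ≤ C₁ * X * Real.exp (-(30 * k * (Kconst k : ℝ) ^ 2 * c₁) * Real.sqrt (Real.log X))



private lemma finite_eval_icc (hdegpos : 0 < h.natDegree) (a b : ℤ) :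
    {n : ℤ | h.eval n ∈ Set.Icc a b}.Finite := by
  have hsub : {n : ℤ | h.eval n ∈ Set.Icc a b} ⊆
      ⋃ v ∈ Set.Icc a b, {n : ℤ | (h - Polynomial.C v).IsRoot n} := by
    intro n hn
    exact Set.mem_biUnion hn (by simp [Polynomial.IsRoot])
  refine Set.Finite.subset (Set.Finite.biUnion (Set.finite_Icc a b) fun v _ => ?_) hsub
  apply Polynomial.finite_setOf_isRoot
  intro h0
  have h1 : (h - Polynomial.C v).natDegree = h.natDegree := Polynomial.natDegree_sub_C
  rw [h0] at h1
  simp at h1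
  omega

private lemma one_le_of_toNat_prime {N : ℤ} (hp : N.toNat.Prime) : (1 : ℝ) ≤ (N : ℝ) := by
  have h2 := hp.two_le
  have h1 : (1 : ℤ) ≤ N := by omega
  exact_mod_cast h1

private lemma nu_nonneg (A : AuxData h) (d : ℕ) (y : ℕ) : 0 ≤ nu A d y := by
  unfold nu
  split
  · rename_i hp
    exact mul_nonneg (by positivity) (Real.log_nonneg (one_le_of_toNat_prime hp))
  · exact le_refl 0

private lemma term_nonneg (A : AuxData h) (k d L : ℕ) (B : Set ℤ) (X : ℤ) (Y : ℕ) :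
    0 ≤ B.indicator (fun _ => (1 : ℝ)) X * B.indicator (fun _ => (1 : ℝ)) (X + hAux A d Y) *
      (Hd A k d L).indicator (fun _ => (1 : ℝ)) Y * nu A d Y :=
  mul_nonneg (mul_nonneg (mul_nonneg (Set.indicator_nonneg (fun _ _ => one_pos.le) _)
    (Set.indicator_nonneg (fun _ _ => one_pos.le) _))
    (Set.indicator_nonneg (fun _ _ => one_pos.le) _)) (nu_nonneg A d Y)

private lemma inner_summable (hdegpos : 0 < h.natDegree) (A : AuxData h)
    (k d L : ℕ) (hd : 0 < d) (B : Set ℤ) (hB : B ⊆ Set.Icc 1 (L : ℤ)) (X : ℤ) :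
    Summable (fun Y : ℕ => B.indicator (fun _ => (1 : ℝ)) X *
      B.indicator (fun _ => (1 : ℝ)) (X + hAux A d Y) *
      (Hd A k d L).indicator (fun _ => (1 : ℝ)) Y * nu A d Y) := by
  apply summable_of_finite_support
  have hlam : (0 : ℤ) < A.lam d := by exact_mod_cast A.lam_pos d
  have hmap : Function.Injective (fun Y : ℕ => A.r d + (d : ℤ) * Y) := by
    intro a b hab
    simp only at hab
    have h2 : (d : ℤ) * a = d * b := by linarith
    have h3 : (a : ℤ) = b := mul_left_cancel₀ (by exact_mod_cast hd.ne') h2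
    exact_mod_cast h3
  apply Set.Finite.subset (Set.Finite.preimage hmap.injOn
    (finite_eval_icc hdegpos ((A.lam d : ℤ) * (1 - X)) ((A.lam d : ℤ) * (L - X))))
  intro Y hY
  have h1 : X + hAux A d Y ∈ B := by
    by_contra hc
    apply hY
    simp [Set.indicator_of_notMem hc]
  have h2 : Y ∈ Hd A k d L := by
    by_contra hc
    apply hY
    simp [Set.indicator_of_notMem hc]
  obtain ⟨hpos, -⟩ := h2
  have hXB := hB h1
  simp only [Set.mem_Icc] at hXB
  have heq : h.eval (A.r d + d * (Y : ℤ)) = (A.lam d : ℤ) * hAux A d Y :=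
    (Int.mul_ediv_cancel' (A.lam_dvd d hd (Y : ℤ))).symm
  show h.eval (A.r d + d * (Y : ℤ)) ∈ Set.Icc _ _
  rw [Set.mem_Icc, heq]
  constructor
  · nlinarith [hXB.1]
  · nlinarith [hXB.2]

private lemma totient_ratio (q d : ℕ) (hq : 0 < q) (hd : 0 < d) :
    (((q * d).totient : ℝ) / ((q * d : ℕ) : ℝ)) ≤ (d.totient : ℝ) / (d : ℝ) := by
  have hdq : 0 < q * d := Nat.mul_pos hq hd
  have hsub : d.primeFactors ⊆ (q * d).primeFactors :=
    Nat.primeFactors_mono (dvd_mul_left d q) hdq.ne'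
  have h1 := Nat.totient_eq_mul_prod_factors (q * d)
  have h2 := Nat.totient_eq_mul_prod_factors d
  have hprod : ∏ p ∈ (q * d).primeFactors, (1 - (p : ℚ)⁻¹) ≤
      ∏ p ∈ d.primeFactors, (1 - (p : ℚ)⁻¹) := by
    have hfac : ∀ p ∈ (q * d).primeFactors, (0 : ℚ) ≤ 1 - (p : ℚ)⁻¹ ∧ (1 - (p : ℚ)⁻¹) ≤ 1 := by
      intro p hp
      have hp2 := (Nat.prime_of_mem_primeFactors hp).two_le
      have hp0 : (0 : ℚ) < p := by exact_mod_cast Nat.lt_of_lt_of_le two_pos hp2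
      constructor
      · have : (p : ℚ)⁻¹ ≤ 1 := by
          rw [inv_le_one_iff₀]
          right
          exact_mod_cast Nat.one_le_of_lt hp2
        linarith
      · have : (0 : ℚ) ≤ (p : ℚ)⁻¹ := by positivity
        linarith
    calc ∏ p ∈ (q * d).primeFactors, (1 - (p : ℚ)⁻¹)
        = (∏ p ∈ (q * d).primeFactors \ d.primeFactors, (1 - (p : ℚ)⁻¹)) *
          ∏ p ∈ d.primeFactors, (1 - (p : ℚ)⁻¹) := (Finset.prod_sdiff hsub).symm
      _ ≤ 1 * ∏ p ∈ d.primeFactors, (1 - (p : ℚ)⁻¹) := by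
          apply mul_le_mul_of_nonneg_right
          · apply Finset.prod_le_one
            · intro i hi; exact (hfac i (Finset.mem_sdiff.mp hi).1).1
            · intro i hi; exact (hfac i (Finset.mem_sdiff.mp hi).1).2
          · exact Finset.prod_nonneg fun i hi => (hfac i (hsub hi)).1
      _ = _ := one_mul _
  have hq1 : (0 : ℚ) < ((q * d : ℕ) : ℚ) := by exact_mod_cast hdq
  have hd1 : (0 : ℚ) < ((d : ℕ) : ℚ) := by exact_mod_cast hd
  have hQ : (((q * d).totient : ℚ) / ((q * d : ℕ) : ℚ)) ≤ (d.totient : ℚ) / (d : ℚ) := by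
    rw [h1, h2, mul_div_cancel_left₀ _ hq1.ne', mul_div_cancel_left₀ _ hd1.ne']
    exact hprod
  have h3 : ((((q * d).totient : ℚ) / ((q * d : ℕ) : ℚ) : ℚ) : ℝ) ≤
      (((d.totient : ℚ) / (d : ℚ) : ℚ) : ℝ) := by exact_mod_cast hQ
  push_cast at h3 ⊢
  convert h3 using 2

/-- **Proposition (inheritance of deficiency)**: if `B ⊆ [1, L]`,
`B' ⊆ {ℓ ∈ [1, L'] : x + ℓ λ(q) ∈ B}` and `L' ≤ L/λ(q)`, then for any `d`,
`R_{qd}(B', L') ≤ R_d(B, L)`. -/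
theorem inheritance_of_deficiency
    (k : ℕ) (hk : 2 ≤ k) (hdeg : h.natDegree = k) (hlead : 0 < h.leadingCoeff)
    (hint : PIntersective h) (A : AuxData h)
    (d q L L' : ℕ) (hd : 0 < d) (hq : 0 < q)
    (hL' : (L' : ℝ) ≤ (L : ℝ) / A.lam q)
    (x : ℤ) (B B' : Set ℤ) (hB : B ⊆ Set.Icc 1 (L : ℤ))
    (hB' : B' ⊆ {l : ℤ | l ∈ Set.Icc 1 (L' : ℤ) ∧ x + l * A.lam q ∈ B}) :
    Rd A k (q * d) L' B' ≤ Rd A k d L B := by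
  classical
  have hdegpos : 0 < h.natDegree := by omega
  have hQpos : 0 < A.lam q := A.lam_pos q
  have hQZ : (0 : ℤ) < (A.lam q : ℤ) := by exact_mod_cast hQpos
  have hdq : 0 < q * d := Nat.mul_pos hq hd
  have hd' : (0 : ℤ) < (d : ℤ) := by exact_mod_cast hd
  have hq' : (0 : ℤ) < (q : ℤ) := by exact_mod_cast hq
  obtain ⟨e, he⟩ := A.r_compat d q hd hq
  have hrqd : A.r (q * d) = A.r d + d * e := by linarith
  have hde : (d : ℤ) * e < d := by
    have h1 := A.r_nonpos (q * d) hdq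
    have h2 := A.r_lt d hd
    linarith
  have he_le : e ≤ 0 := by nlinarith
  have hdegt : -((q : ℤ) * d) < (d : ℤ) * e := by
    have h1 := A.r_lt (q * d) hdq
    have h2 := A.r_nonpos d hd
    push_cast at h1
    linarith
  have he_gt : -(q : ℤ) < e := by nlinarith
  -- key identity
  have hkey : ∀ n : ℤ, (A.lam q : ℤ) * hAux A (q * d) n = hAux A d (e + q * n) := by
    intro n
    obtain ⟨c, hc⟩ := A.lam_dvd (q * d) hdq n
    have hlq : ((A.lam (q * d) : ℕ) : ℤ) = (A.lam q : ℤ) * (A.lam d : ℤ) := by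
      exact_mod_cast A.lam_mul q d
    have hlamd : ((A.lam d : ℕ) : ℤ) ≠ 0 := by
      have := A.lam_pos d; positivity
    have heval : h.eval (A.r d + (d : ℤ) * (e + q * n)) = (A.lam d : ℤ) * ((A.lam q : ℤ) * c) := by
      rw [show A.r d + (d : ℤ) * (e + q * n) = A.r (q * d) + ((q * d : ℕ) : ℤ) * n by
        rw [hrqd]; push_cast; ring]
      rw [hc, hlq]; ring
    unfold hAux
    rw [heval, hc, hlq, Int.mul_ediv_cancel_left _ hlamd,
      show (A.lam q : ℤ) * (A.lam d : ℤ) * c = ((A.lam q : ℤ) * (A.lam d : ℤ)) * c from rfl,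
      Int.mul_ediv_cancel_left _ (by positivity : ((A.lam q : ℤ) * (A.lam d : ℤ)) ≠ 0)]
  have hYt : ∀ y : ℕ, 1 ≤ y → ((e + q * (y : ℤ)).toNat : ℤ) = e + q * y := by
    intro y hy
    rw [Int.toNat_of_nonneg]
    have hqy : (q : ℤ) ≤ q * y :=
      le_mul_of_one_le_right hq'.le (by exact_mod_cast hy)
    linarith
  -- nu comparison
  have htot := totient_ratio q d hq hd
  have hnu : ∀ y : ℕ, 1 ≤ y → nu A (q * d) y ≤ nu A d (e + q * (y : ℤ)).toNat := by
    intro y hy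
    have ht := hYt y hy
    have hN : A.r (q * d) + ((q * d : ℕ) : ℤ) * (y : ℤ)
        = A.r d + (d : ℤ) * (((e + q * (y : ℤ)).toNat : ℕ) : ℤ) := by
      rw [ht, hrqd]; push_cast; ring
    unfold nu
    rw [hN]
    split
    · rename_i hp
      exact mul_le_mul_of_nonneg_right htot (Real.log_nonneg (one_le_of_toNat_prime hp))
    · exact le_refl 0
  -- Hd mapping
  have hHd : ∀ y : ℕ, 1 ≤ y → y ∈ Hd A k (q * d) L' →
      ((e + q * (y : ℤ)).toNat) ∈ Hd A k d L := by
    intro y hy hmem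
    obtain ⟨h1, h2⟩ := hmem
    have ht := hYt y hy
    have hkey' : hAux A d ((((e + q * (y : ℤ)).toNat : ℕ)) : ℤ)
        = (A.lam q : ℤ) * hAux A (q * d) y := by rw [ht]; exact (hkey y).symm
    have hs : (0 : ℝ) < (sconst k : ℝ) := by
      unfold sconst; positivity
    have hQ' : (0 : ℝ) < (A.lam q : ℝ) := by exact_mod_cast hQpos
    constructor
    · rw [hkey']
      exact mul_pos hQZ h1
    · rw [hkey']
      push_cast
      have hLL : (A.lam q : ℝ) * (L' : ℝ) ≤ (L : ℝ) := by
        rw [le_div_iff₀ hQ'] at hL'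
        linarith
      calc (A.lam q : ℝ) * (hAux A (q * d) (y : ℤ) : ℝ)
          < (A.lam q : ℝ) * ((L' : ℝ) / (sconst k : ℝ)) := by
            exact mul_lt_mul_of_pos_left h2 hQ'
        _ = ((A.lam q : ℝ) * (L' : ℝ)) / (sconst k : ℝ) := by ring
        _ ≤ (L : ℝ) / (sconst k : ℝ) := by gcongr
  have hB'sub : B' ⊆ Set.Icc 1 (L' : ℤ) := fun l hl => (hB' hl).1
  -- pointwise bound
  have hpt : ∀ (x' : ℤ) (y : ℕ),
      B'.indicator (fun _ => (1 : ℝ)) x' *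
        B'.indicator (fun _ => (1 : ℝ)) (x' + hAux A (q * d) y) *
        (Hd A k (q * d) L').indicator (fun _ => (1 : ℝ)) y * nu A (q * d) y
      ≤ B.indicator (fun _ => (1 : ℝ)) (x + x' * (A.lam q : ℤ)) *
        B.indicator (fun _ => (1 : ℝ))
          ((x + x' * (A.lam q : ℤ)) + hAux A d ((e + q * (y : ℤ)).toNat)) *
        (Hd A k d L).indicator (fun _ => (1 : ℝ)) ((e + q * (y : ℤ)).toNat) *
        nu A d ((e + q * (y : ℤ)).toNat) := by
    intro x' y
    rcases Nat.eq_zero_or_pos y with rfl | hy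
    · have hz : nu A (q * d) 0 = 0 := by
        unfold nu
        rw [if_neg]
        intro hp
        have h0 : A.r (q * d) + ((q * d : ℕ) : ℤ) * ((0 : ℕ) : ℤ) ≤ 0 := by
          have := A.r_nonpos (q * d) hdq
          push_cast
          linarith
        rw [Int.toNat_eq_zero.mpr h0] at hp
        exact Nat.not_prime_zero hp
      rw [hz, mul_zero]
      exact term_nonneg A k d L B _ _
    · by_cases h1 : x' ∈ B'
      · by_cases h2 : x' + hAux A (q * d) y ∈ B'
        · by_cases h3 : y ∈ Hd A k (q * d) L'
          · rw [Set.indicator_of_mem h1, Set.indicator_of_mem h2, Set.indicator_of_mem h3]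
            have hx1 : x + x' * (A.lam q : ℤ) ∈ B := (hB' h1).2
            have heq2 : hAux A d ((((e + q * (y : ℤ)).toNat : ℕ)) : ℤ)
                = (A.lam q : ℤ) * hAux A (q * d) y := by
              rw [hYt y hy]; exact (hkey y).symm
            have hx2 : (x + x' * (A.lam q : ℤ)) + hAux A d ((e + q * (y : ℤ)).toNat) ∈ B := by
              rw [heq2]
              have hmem := (hB' h2).2
              convert hmem using 1
              ring
            rw [Set.indicator_of_mem hx1, Set.indicator_of_mem hx2,
              Set.indicator_of_mem (hHd y hy h3)]
            simpa using hnu y hy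
          · rw [Set.indicator_of_notMem h3]
            simpa using term_nonneg A k d L B (x + x' * (A.lam q : ℤ)) ((e + q * (y : ℤ)).toNat)
        · rw [Set.indicator_of_notMem h2]
          simpa using term_nonneg A k d L B (x + x' * (A.lam q : ℤ)) ((e + q * (y : ℤ)).toNat)
      · rw [Set.indicator_of_notMem h1]
        simpa using term_nonneg A k d L B (x + x' * (A.lam q : ℤ)) ((e + q * (y : ℤ)).toNat)
  -- inner injectivity
  have hinj2 : Function.Injective (fun y : ℕ => (e + q * (y : ℤ)).toNat) := by
    have hzero : (e + q * ((0 : ℕ) : ℤ)).toNat = 0 := by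
      apply Int.toNat_eq_zero.mpr
      push_cast
      linarith
    intro a b hab
    simp only at hab
    rcases Nat.eq_zero_or_pos a with rfl | ha <;> rcases Nat.eq_zero_or_pos b with rfl | hb
    · rfl
    · exfalso
      rw [hzero] at hab
      have h1 := hYt b hb
      have hqb : (q : ℤ) ≤ q * (b : ℤ) :=
        le_mul_of_one_le_right hq'.le (by exact_mod_cast hb)
      omega
    · exfalso
      rw [hzero] at hab
      have h1 := hYt a ha
      have hqa : (q : ℤ) ≤ q * (a : ℤ) :=
        le_mul_of_one_le_right hq'.le (by exact_mod_cast ha)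
      omega
    · have h1 := hYt a ha
      have h2 := hYt b hb
      rw [hab] at h1
      rw [h2] at h1
      have h3 : (q : ℤ) * a = q * b := by linarith
      have h4 : (a : ℤ) = b := mul_left_cancel₀ hq'.ne' h3
      exact_mod_cast h4
  -- outer injectivity
  have hinj1 : Function.Injective (fun x' : ℤ => x + x' * (A.lam q : ℤ)) := by
    intro a b hab
    simp only at hab
    have h3 : a * (A.lam q : ℤ) = b * (A.lam q : ℤ) := by linarith
    exact mul_right_cancel₀ hQZ.ne' h3
  unfold Rd
  apply Summable.tsum_le_tsum_of_inj (fun x' : ℤ => x + x' * (A.lam q : ℤ)) hinj1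
  · intro c _
    exact tsum_nonneg fun y => term_nonneg A k d L B c y
  · intro x'
    apply Summable.tsum_le_tsum_of_inj (fun y : ℕ => (e + q * (y : ℤ)).toNat) hinj2
    · intro c _
      exact term_nonneg A k d L B (x + x' * (A.lam q : ℤ)) c
    · intro y
      exact hpt x' y
    · exact inner_summable hdegpos A k (q * d) L' hdq B' hB'sub x'
    · exact inner_summable hdegpos A k d L hd B hB (x + x' * (A.lam q : ℤ))
  · apply summable_of_finite_support
    apply Set.Finite.subset (Set.finite_Icc (1 : ℤ) (L' : ℤ))
    intro x' hx'
    by_contra hc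
    apply hx'
    have hnB : x' ∉ B' := fun hmem => hc (hB'sub hmem)
    simp only [Function.mem_support] at *
    have : ∀ y : ℕ, B'.indicator (fun _ => (1 : ℝ)) x' *
        B'.indicator (fun _ => (1 : ℝ)) (x' + hAux A (q * d) y) *
        (Hd A k (q * d) L').indicator (fun _ => (1 : ℝ)) y * nu A (q * d) y = 0 := by
      intro y
      simp [Set.indicator_of_notMem hnB]
    simp only [this, tsum_zero]
  · apply summable_of_finite_support
    apply Set.Finite.subset (Set.finite_Icc (1 : ℤ) (L : ℤ))
    intro X hX
    by_contra hc
    apply hX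
    have hnB : X ∉ B := fun hmem => hc (hB hmem)
    simp only [Function.mem_support] at *
    have : ∀ y : ℕ, B.indicator (fun _ => (1 : ℝ)) X *
        B.indicator (fun _ => (1 : ℝ)) (X + hAux A d y) *
        (Hd A k d L).indicator (fun _ => (1 : ℝ)) y * nu A d y = 0 := by
      intro y
      simp [Set.indicator_of_notMem hnB]
    simp only [this, tsum_zero]


end
end

section
/- For every polynomial h ∈ ℤ[x], the following are equivalent: (i) for every q ∈ ℕ there exists r ∈ ℤ with gcd(r, q) = 1 and q ∣ h(r); (ii) for every prime p there exists z ∈ ℤ_p, the ring of p-adic integers, with h(z) = 0 and z ∉ p·ℤ_p. -/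
open Polynomial

lemma aeval_intCast_padic {p : ℕ} [Fact p.Prime] (h : Polynomial ℤ) (r : ℤ) :
    Polynomial.aeval ((r : ℤ_[p])) h = ((h.eval r : ℤ) : ℤ_[p]) := by
  have := Polynomial.aeval_algebraMap_apply_eq_algebraMap_eval (A := ℤ_[p]) r h
  simpa using this

/-- prime power case of the backward direction -/
lemma padic_root_to_mod {p : ℕ} (hp : p.Prime) [Fact p.Prime] (h : Polynomial ℤ)
    (z : ℤ_[p]) (hz : Polynomial.aeval z h = 0) (hzu : ¬((p : ℤ_[p]) ∣ z))
    (n : ℕ) (hn : 0 < n) :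
    ∃ r : ℤ, Int.gcd r ((p : ℤ) ^ n) = 1 ∧ ((p : ℤ) ^ n) ∣ h.eval r := by
  set r : ℤ := (z.appr n : ℤ) with hr
  have hspan := z.appr_spec n
  rw [Ideal.mem_span_singleton] at hspan
  have hcast : ((z.appr n : ℕ) : ℤ_[p]) = ((r : ℤ) : ℤ_[p]) := by rw [hr]; push_cast; ring
  have hd : (p : ℤ_[p]) ^ n ∣ z - (r : ℤ_[p]) := by rw [← hcast]; exact hspan
  -- divisibility of the value
  have hval : (p : ℤ_[p]) ^ n ∣ ((h.eval r : ℤ) : ℤ_[p]) := by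
    have hsub : ((r : ℤ_[p]) - z) ∣
        ((h.map (Int.castRingHom ℤ_[p])).eval (r : ℤ_[p])
          - (h.map (Int.castRingHom ℤ_[p])).eval z) :=
      Polynomial.sub_dvd_eval_sub _ _ _
    have hmap : ∀ c : ℤ_[p], (h.map (Int.castRingHom ℤ_[p])).eval c = Polynomial.aeval c h := by
      intro c
      rw [Polynomial.aeval_def, Polynomial.eval₂_eq_eval_map, algebraMap_int_eq]
    have he1 : (h.map (Int.castRingHom ℤ_[p])).eval (r : ℤ_[p]) = ((h.eval r : ℤ) : ℤ_[p]) := by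
      rw [hmap]; exact aeval_intCast_padic h r
    have he2 : (h.map (Int.castRingHom ℤ_[p])).eval z = 0 := by
      rw [hmap]; exact hz
    rw [he1, he2, sub_zero] at hsub
    exact dvd_trans ((dvd_neg).mpr hd) (by simpa [neg_sub] using hsub)
  have hvalZ : ((p : ℤ) ^ n) ∣ h.eval r := by
    rwa [PadicInt.pow_p_dvd_int_iff] at hval
  -- coprimality
  have hnd : ¬ ((p : ℤ) ∣ r) := by
    intro hdr
    apply hzu
    have h1 : (p : ℤ_[p]) ∣ (r : ℤ_[p]) := by
      obtain ⟨k, hk⟩ := hdr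
      exact ⟨(k : ℤ_[p]), by rw [hk]; push_cast; ring⟩
    have h2 : (p : ℤ_[p]) ∣ z - (r : ℤ_[p]) :=
      dvd_trans (dvd_pow_self _ hn.ne') hd
    have := dvd_add h2 h1
    simpa using this
  have hcop : IsCoprime r ((p : ℤ) ^ n) := by
    apply IsCoprime.pow_right
    rw [isCoprime_comm]
    exact (Int.prime_iff_natAbs_prime.mpr (by simpa using hp)).coprime_iff_not_dvd.mpr hnd
  exact ⟨r, Int.isCoprime_iff_gcd_eq_one.mp hcop, hvalZ⟩

/-- CRT combination step -/
lemma crt_step (h : Polynomial ℤ) (a b : ℕ) (hab : Nat.Coprime a b)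
    (r1 r2 : ℤ) (h1 : IsCoprime r1 (a : ℤ)) (h2 : IsCoprime r2 (b : ℤ))
    (hd1 : (a : ℤ) ∣ h.eval r1) (hd2 : (b : ℤ) ∣ h.eval r2) :
    ∃ r : ℤ, IsCoprime r ((a : ℤ) * b) ∧ ((a : ℤ) * b) ∣ h.eval r := by
  obtain ⟨u, v, huv⟩ := Nat.isCoprime_iff_coprime.mpr hab
  refine ⟨r2 * ((a : ℤ) * u) + r1 * ((b : ℤ) * v), ?_, ?_⟩
  · apply IsCoprime.mul_right
    · have : r2 * ((a : ℤ) * u) + r1 * ((b : ℤ) * v) = r1 + (a : ℤ) * (u * (r2 - r1)) := by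
        linear_combination r1 * huv
      rw [this]
      exact h1.add_mul_left_left _
    · have : r2 * ((a : ℤ) * u) + r1 * ((b : ℤ) * v) = r2 + (b : ℤ) * (v * (r1 - r2)) := by
        linear_combination r2 * huv
      rw [this]
      exact h2.add_mul_left_left _
  · set r := r2 * ((a : ℤ) * u) + r1 * ((b : ℤ) * v) with hrdef
    have key : ∀ (c : ℤ) (s : ℤ), c ∣ r - s → c ∣ h.eval s → c ∣ h.eval r := by
      intro c s hc hs
      have := Polynomial.sub_dvd_eval_sub r s h
      have : c ∣ h.eval r - h.eval s := dvd_trans hc this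
      simpa using dvd_add this hs
    apply (Nat.isCoprime_iff_coprime.mpr hab).mul_dvd
    · refine key _ r1 ⟨u * (r2 - r1), by linear_combination r1 * huv⟩ hd1
    · refine key _ r2 ⟨v * (r1 - r2), by linear_combination r2 * huv⟩ hd2

/-- **Equivalence of the two definitions of `ℙ`-intersectivity**: `h ∈ ℤ[x]` has, for
every `q ∈ ℕ`, a root modulo `q` coprime to `q` if and only if for every prime `p` it
has a `p`-adic integer root which is a unit in `ℤ_p`. -/
theorem P_intersective_iff_padic (h : Polynomial ℤ) :
    (∀ q : ℕ, 0 < q → ∃ r : ℤ, Int.gcd r q = 1 ∧ (q : ℤ) ∣ h.eval r) ↔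
    (∀ p : ℕ, (hp : p.Prime) →
      haveI : Fact p.Prime := ⟨hp⟩
      ∃ z : ℤ_[p], Polynomial.aeval z h = 0 ∧ ¬((p : ℤ_[p]) ∣ z)) := by
  constructor
  · intro H p hp
    haveI : Fact p.Prime := ⟨hp⟩
    -- nested sequence of closed sets
    set S : ℕ → Set ℤ_[p] :=
      fun n => {z | ‖Polynomial.aeval z h‖ ≤ (p : ℝ) ^ (-(n : ℤ)) ∧ ‖z‖ = 1} with hS
    have hp1 : (1 : ℝ) ≤ (p : ℝ) := by exact_mod_cast hp.one_lt.le
    have hSc : ∀ n, IsClosed (S n) := by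
      intro n
      apply IsClosed.inter
      · exact isClosed_le ((Polynomial.continuous_aeval h).norm) continuous_const
      · exact isClosed_eq continuous_norm continuous_const
    have hSn : ∀ n, (S n).Nonempty := by
      intro n
      obtain ⟨r, hg, hd⟩ := H (p ^ (n + 1)) (pow_pos hp.pos _)
      refine ⟨(r : ℤ_[p]), ?_, ?_⟩
      · rw [aeval_intCast_padic]
        have : ((p : ℤ) ^ (n + 1)) ∣ h.eval r := by
          have := hd; push_cast at this ⊢; exact this
        have hle := PadicInt.norm_int_le_pow_iff_dvd (p := p) (k := h.eval r) (n := n+1)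
        refine le_trans (hle.mpr this) ?_
        apply zpow_le_zpow_right₀ hp1; omega
      · have hnd : ¬ ((p : ℤ) ∣ r) := by
          intro hdr
          have h2 : (p : ℤ) ∣ ((p ^ (n+1) : ℕ) : ℤ) := by
            push_cast; exact dvd_pow_self _ (Nat.succ_ne_zero n)
          have h3 : (p : ℤ) ∣ (Int.gcd r ((p ^ (n+1) : ℕ)) : ℤ) := Int.dvd_coe_gcd hdr h2
          rw [hg] at h3
          have h4 := Int.le_of_dvd one_pos h3
          have h5 := hp.two_le
          omega
        have hle1 : ‖(r : ℤ_[p])‖ ≤ 1 := PadicInt.norm_le_one _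
        have hlt : ¬ ‖(r : ℤ_[p])‖ < 1 := fun hc =>
          hnd ((PadicInt.norm_int_lt_one_iff_dvd r).mp hc)
        linarith [lt_or_ge (‖(r : ℤ_[p])‖) 1]
    have hmono : ∀ i, S (i + 1) ⊆ S i := by
      intro i z hzi
      refine ⟨le_trans hzi.1 ?_, hzi.2⟩
      apply zpow_le_zpow_right₀ hp1; omega
    obtain ⟨z, hzmem⟩ := IsCompact.nonempty_iInter_of_sequence_nonempty_isCompact_isClosed
      S hmono hSn ((hSc 0).isCompact) hSc
    simp only [Set.mem_iInter] at hzmem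
    refine ⟨z, ?_, ?_⟩
    · by_contra hne
      have hpos : 0 < ‖Polynomial.aeval z h‖ := norm_pos_iff.mpr hne
      obtain ⟨k, hk⟩ := PadicInt.exists_pow_neg_lt p hpos
      exact absurd ((hzmem k).1) (not_le.mpr hk)
    · intro hdvd
      have := (PadicInt.norm_lt_one_iff_dvd z).mpr hdvd
      rw [(hzmem 0).2] at this
      exact lt_irrefl _ this
  · intro H q hq
    induction q using Nat.recOnPosPrimePosCoprime with
    | prime_pow p n hpp hn =>
        have hp' : p.Prime := hpp
        haveI : Fact p.Prime := ⟨hp'⟩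
        obtain ⟨z, hz, hzu⟩ := H p hp'
        obtain ⟨r, hg, hd⟩ := padic_root_to_mod hp' h z hz hzu n hn
        exact ⟨r, by push_cast; exact_mod_cast hg, by push_cast at hd ⊢; exact hd⟩
    | zero => omega
    | one => exact ⟨1, by simp, by simp⟩
    | coprime a b ha hb hab iha ihb =>
        obtain ⟨r1, hg1, hd1⟩ := iha (by omega)
        obtain ⟨r2, hg2, hd2⟩ := ihb (by omega)
        obtain ⟨r, hc, hd⟩ := crt_step h a b hab r1 r2
          (Int.isCoprime_iff_gcd_eq_one.mpr hg1) (Int.isCoprime_iff_gcd_eq_one.mpr hg2)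
          hd1 hd2
        refine ⟨r, ?_, ?_⟩
        · have := Int.isCoprime_iff_gcd_eq_one.mp hc
          rwa [show ((a*b : ℕ) : ℤ) = (a:ℤ)*b by push_cast; ring]
        · rwa [show ((a*b : ℕ) : ℤ) = (a:ℤ)*b by push_cast; ring]
end

section
/- Let h ∈ ℤ[x] have degree 2. Then h is P-intersective if and only if there exist integers a, b, c, d, e with b ≥ 1, d ≥ 1, e ≠ 0, gcd(a, b) = 1, gcd(c, d) = 1, gcd(a·b, c·d) = 1, and h(x) = e·(bx − a)·(dx − c); that is, if and only if h has two rational roots a/b and c/d (counted with multiplicity, in lowest terms) with gcd(ab, cd) = 1. -/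
open Polynomial



lemma aux_coprime_of_prime_not_dvd' {p : ℕ} (hp : p.Prime) {x : ℤ} (h : ¬ (p:ℤ) ∣ x) :
    IsCoprime (p:ℤ) x := by
  rw [Int.isCoprime_iff_gcd_eq_one]
  have : ¬ p ∣ x.natAbs := fun hd => h (Int.natCast_dvd.mpr hd)
  exact (Nat.Prime.coprime_iff_not_dvd hp).mpr this

lemma aux_prime_dvd_both {q : ℕ} (hq : q.Prime) {x y : ℤ} (hx : (q:ℤ) ∣ x) (hy : (q:ℤ) ∣ y)
    (hg : Int.gcd x y = 1) : False := by
  have h1 : (q:ℤ) ∣ ((Int.gcd x y : ℕ) : ℤ) := Int.dvd_coe_gcd hx hy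
  rw [hg] at h1
  have := Int.eq_one_of_dvd_one (by positivity) h1
  exact hq.one_lt.ne' (by exact_mod_cast this)

lemma aux_rep (h : Polynomial ℤ) (hdeg : h.natDegree = 2) :
    h = C (h.coeff 2) * X^2 + C (h.coeff 1) * X + C (h.coeff 0) := by
  ext n
  simp only [coeff_add, coeff_C_mul, coeff_X_pow, coeff_X, coeff_C]
  match n with
  | 0 => norm_num
  | 1 => norm_num
  | 2 => norm_num
  | (n+3) =>
    have h1 : h.coeff (n+3) = 0 := coeff_eq_zero_of_natDegree_lt (by omega)
    rw [h1]
    norm_num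
    omega




/-- A prime not dividing an integer is coprime to it. -/
lemma aux_coprime_of_prime_not_dvd {p : ℕ} (hp : p.Prime) {x : ℤ} (h : ¬ (p:ℤ) ∣ x) :
    IsCoprime (p:ℤ) x := by
  rw [Int.isCoprime_iff_gcd_eq_one]
  have : ¬ p ∣ x.natAbs := fun hd => h (Int.natCast_dvd.mpr hd)
  exact (Nat.Prime.coprime_iff_not_dvd hp).mpr this

/-- An integer that is a square modulo every positive natural number is a perfect square. -/
lemma aux_isSquare_of_forall_mod (D : ℤ) (H : ∀ q : ℕ, 0 < q → ∃ t : ℤ, (q:ℤ) ∣ t^2 - D) :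
    IsSquare D := by
  suffices hgen : ∀ (n : ℕ) (D : ℤ), D.natAbs = n →
      (∀ q : ℕ, 0 < q → ∃ t : ℤ, (q:ℤ) ∣ t^2 - D) → IsSquare D from
    hgen D.natAbs D rfl H
  clear H D
  intro n
  induction n using Nat.strong_induction_on with
  | _ n ih =>
  intro D hn H
  rcases eq_or_ne D 0 with rfl | hD0
  · exact ⟨0, by ring⟩
  rcases eq_or_ne D 1 with rfl | hD1
  · exact ⟨1, by ring⟩
  rcases eq_or_ne D (-1) with rfl | hDm1
  · exfalso
    obtain ⟨t, ht⟩ := H 4 (by norm_num)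
    rcases Int.even_or_odd t with ⟨k, hk⟩ | ⟨k, hk⟩
    · subst hk
      obtain ⟨m, hm⟩ := ht
      have he : (k+k)^2 - (-1) = 4*(k^2)+1 := by ring
      rw [he] at hm
      obtain ⟨j, hj⟩ : ∃ j, k^2 = j := ⟨_, rfl⟩
      rw [hj] at hm; omega
    · subst hk
      obtain ⟨m, hm⟩ := ht
      have he : (2*k+1)^2 - (-1) = 4*(k^2+k)+2 := by ring
      rw [he] at hm
      obtain ⟨j, hj⟩ : ∃ j, k^2+k = j := ⟨_, rfl⟩
      rw [hj] at hm; omega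
  -- D.natAbs ≥ 2, so it has a prime factor
  have hna : D.natAbs ≠ 1 := by
    intro hone
    rcases Int.natAbs_eq D with he | he <;> rw [hone] at he <;> simp_all
  obtain ⟨p, hp, hpd⟩ := Nat.exists_prime_and_dvd hna
  have hpD : (p:ℤ) ∣ D := Int.natCast_dvd.mpr hpd
  have hp2 : ((p:ℤ)^2 ∣ D) := by
    by_contra hnp2
    obtain ⟨t, ht⟩ := H (p^2) (pow_pos hp.pos 2)
    push_cast at ht
    have hpt2 : (p:ℤ) ∣ t^2 := by
      have h1 : (p:ℤ) ∣ t^2 - D := dvd_trans (dvd_pow_self _ two_ne_zero) ht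
      have := dvd_add h1 hpD
      simpa using this
    have hpt : (p:ℤ) ∣ t := (Int.Prime.dvd_pow' hp hpt2)
    have : (p:ℤ)^2 ∣ t^2 := by
      obtain ⟨u, hu⟩ := hpt; exact ⟨u^2, by rw [hu]; ring⟩
    have : (p:ℤ)^2 ∣ D := by
      have := dvd_sub this ht
      simpa using this
    exact hnp2 this
  obtain ⟨D', hD'⟩ := hp2
  have hppos : (0:ℤ) < (p:ℤ)^2 := by exact_mod_cast pow_pos hp.pos 2
  have hD'0 : D' ≠ 0 := by rintro rfl; simp at hD'; exact hD0 (by simp [hD'])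
  have hH' : ∀ q : ℕ, 0 < q → ∃ t : ℤ, (q:ℤ) ∣ t^2 - D' := by
    intro q hq
    obtain ⟨t, ht⟩ := H (p^2 * q) (Nat.mul_pos (pow_pos hp.pos 2) hq)
    push_cast at ht
    have hpt2 : (p:ℤ)^2 ∣ t^2 := by
      have h1 : (p:ℤ)^2 ∣ t^2 - D := dvd_trans (Dvd.intro _ rfl) ht
      have := dvd_add h1 ⟨D', hD'⟩
      simpa using this
    have hpt : (p:ℤ) ∣ t := Int.Prime.dvd_pow' hp (dvd_trans (dvd_pow_self _ two_ne_zero) hpt2)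
    obtain ⟨t', rfl⟩ := hpt
    refine ⟨t', ?_⟩
    have key : (p:ℤ)^2 * ((q:ℤ) * 1) ∣ (p:ℤ)^2 * (t'^2 - D') := by
      have : ((p:ℤ)*t')^2 - D = (p:ℤ)^2 * (t'^2 - D') := by rw [hD']; ring
      rw [← this]; simpa [mul_comm] using ht
    have := (mul_dvd_mul_iff_left (a := (p:ℤ)^2) (by exact_mod_cast (pow_pos hp.pos 2).ne')).mp key
    simpa using this
  have hlt : D'.natAbs < n := by
    have h1 : D.natAbs = p^2 * D'.natAbs := by
      rw [hD', Int.natAbs_mul]; simp [Int.natAbs_pow]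
    have hp2' : 1 < p^2 := by nlinarith [hp.two_le]
    have hpos := Nat.pos_of_ne_zero (Int.natAbs_ne_zero.mpr hD'0)
    rw [← hn, h1]
    nlinarith
  obtain ⟨r, hr⟩ := ih D'.natAbs hlt D' rfl hH' 
  exact ⟨(p:ℤ)*r, by rw [hD', hr]; ring⟩



/-- solve `b*r ≡ a` mod `p^n` with `r` coprime to `p^n`, given `p ∤ a`, `p ∤ b`. -/
lemma aux_solve_prime_pow {p : ℕ} (hp : p.Prime) (n : ℕ) (hn : 0 < n) {a b : ℤ}
    (hpa : ¬ (p:ℤ) ∣ a) (hpb : ¬ (p:ℤ) ∣ b) :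
    ∃ r : ℤ, Int.gcd r ((p:ℤ)^n) = 1 ∧ ((p:ℤ)^n) ∣ b * r - a := by
  have hcop : IsCoprime b ((p:ℤ)^n) :=
    (aux_coprime_of_prime_not_dvd' hp hpb).pow_left.symm
  obtain ⟨u, v, huv⟩ := hcop
  refine ⟨u * a, ?_, ⟨-(v * a), by linear_combination a * huv⟩⟩
  have hpr : ¬ (p:ℤ) ∣ u * a := by
    intro hd
    rcases (Int.Prime.dvd_mul' hp hd) with hu | ha
    · have : (p:ℤ) ∣ 1 := by
        have h1 : (p:ℤ) ∣ u * b := hu.mul_right b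
        have h2 : (p:ℤ) ∣ v * (p:ℤ)^n := Dvd.dvd.mul_left (dvd_pow_self _ hn.ne') v
        calc (p:ℤ) ∣ u * b + v * (p:ℤ)^n := dvd_add h1 h2
        _ = 1 := huv
      exact hp.one_lt.ne' (by exact_mod_cast Int.eq_one_of_dvd_one (by positivity) this)
    · exact hpa ha
  rw [← Int.isCoprime_iff_gcd_eq_one]
  exact (aux_coprime_of_prime_not_dvd' hp hpr).pow_left.symm

/-- The easy direction: the factored form is intersective. -/
lemma aux_converse (h : Polynomial ℤ) (a b c d e : ℤ)
    (hab : Int.gcd a b = 1) (hcd : Int.gcd c d = 1) (habcd : Int.gcd (a * b) (c * d) = 1)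
    (hrep : h = C e * (C b * X - C a) * (C d * X - C c)) :
    ∀ q : ℕ, 0 < q → ∃ r : ℤ, Int.gcd r q = 1 ∧ (q : ℤ) ∣ h.eval r := by
  have heval : ∀ r : ℤ, h.eval r = e * (b * r - a) * (d * r - c) := by
    intro r; simp [hrep]
  intro q
  induction q using Nat.recOnPosPrimePosCoprime with
  | prime_pow p n hpp hn =>
    intro _
    have hp' : p.Prime := hpp
    by_cases hpab : (p:ℤ) ∣ a * b
    · -- then p ∤ c*d
      have hpcd : ¬ (p:ℤ) ∣ c * d := by
        intro hcd'
        have : (p:ℤ) ∣ ((Int.gcd (a*b) (c*d) : ℕ) : ℤ) := Int.dvd_coe_gcd hpab hcd'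
        rw [habcd] at this
        exact hp'.one_lt.ne' (by exact_mod_cast Int.eq_one_of_dvd_one (by positivity) this)
      have hpc : ¬ (p:ℤ) ∣ c := fun hd => hpcd (hd.mul_right d)
      have hpd : ¬ (p:ℤ) ∣ d := fun hd => hpcd (hd.mul_left c)
      obtain ⟨r, hr1, hr2⟩ := aux_solve_prime_pow hp' n hn hpc hpd
      refine ⟨r, by push_cast; exact hr1, ?_⟩
      rw [heval]
      push_cast
      exact Dvd.dvd.mul_left hr2 (e * (b * r - a))
    · have hpa : ¬ (p:ℤ) ∣ a := fun hd => hpab (hd.mul_right b)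
      have hpb : ¬ (p:ℤ) ∣ b := fun hd => hpab (hd.mul_left a)
      obtain ⟨r, hr1, hr2⟩ := aux_solve_prime_pow hp' n hn hpa hpb
      refine ⟨r, by push_cast; exact hr1, ?_⟩
      rw [heval]
      push_cast
      have : (b * r - a) ∣ e * (b * r - a) * (d * r - c) :=
        Dvd.dvd.mul_right (Dvd.dvd.mul_left dvd_rfl e) _
      exact hr2.trans this
  | zero => intro h0; exact absurd h0 (lt_irrefl 0)
  | one => intro _; exact ⟨1, by simp, by simp⟩
  | coprime a' b' ha' hb' hcop iha ihb =>
    intro _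
    obtain ⟨r₁, hr₁g, hr₁d⟩ := iha (by omega)
    obtain ⟨r₂, hr₂g, hr₂d⟩ := ihb (by omega)
    obtain ⟨x, y, huv⟩ := (Nat.isCoprime_iff_coprime (m := a') (n := b')).mpr hcop
    set r : ℤ := r₁ * y * b' + r₂ * x * a' with hr
    have hd1 : (a' : ℤ) ∣ r - r₁ := ⟨x * (r₂ - r₁), by linear_combination r₁ * huv⟩
    have hd2 : (b' : ℤ) ∣ r - r₂ := ⟨y * (r₁ - r₂), by linear_combination r₂ * huv⟩
    have hc1 : IsCoprime r (a' : ℤ) := by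
      obtain ⟨k, hk⟩ := hd1
      have : r = r₁ + (a':ℤ) * k := by linarith
      rw [this]
      exact (Int.isCoprime_iff_gcd_eq_one.mpr hr₁g).add_mul_left_left k
    have hc2 : IsCoprime r (b' : ℤ) := by
      obtain ⟨k, hk⟩ := hd2
      have : r = r₂ + (b':ℤ) * k := by linarith
      rw [this]
      exact (Int.isCoprime_iff_gcd_eq_one.mpr hr₂g).add_mul_left_left k
    have hdv1 : (a' : ℤ) ∣ h.eval r := by
      have := (Polynomial.sub_dvd_eval_sub r r₁ h)
      have h2 : (a' : ℤ) ∣ h.eval r - h.eval r₁ := hd1.trans this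
      have := dvd_add h2 hr₁d
      simpa using this
    have hdv2 : (b' : ℤ) ∣ h.eval r := by
      have := (Polynomial.sub_dvd_eval_sub r r₂ h)
      have h2 : (b' : ℤ) ∣ h.eval r - h.eval r₂ := hd2.trans this
      have := dvd_add h2 hr₂d
      simpa using this
    refine ⟨r, ?_, ?_⟩
    · rw [← Int.isCoprime_iff_gcd_eq_one]
      push_cast
      exact (hc1.mul_right hc2)
    · push_cast
      exact ((Nat.isCoprime_iff_coprime.mpr hcop)).mul_dvd hdv1 hdv2

/-- The hard direction. -/
lemma aux_forward (h : Polynomial ℤ) (hdeg : h.natDegree = 2)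
    (H : ∀ q : ℕ, 0 < q → ∃ r : ℤ, Int.gcd r q = 1 ∧ (q : ℤ) ∣ h.eval r) :
    (∃ a b c d e : ℤ, 1 ≤ b ∧ 1 ≤ d ∧ e ≠ 0 ∧
      Int.gcd a b = 1 ∧ Int.gcd c d = 1 ∧ Int.gcd (a * b) (c * d) = 1 ∧
      h = C e * (C b * X - C a) * (C d * X - C c)) := by
  set A := h.coeff 2 with hA_def
  set B := h.coeff 1 with hB_def
  set C0 := h.coeff 0 with hC0_def
  have hrep := aux_rep h hdeg
  have hne : h ≠ 0 := fun h0 => by simp [h0] at hdeg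
  have hA : A ≠ 0 := by
    have := Polynomial.leadingCoeff_ne_zero.mpr hne
    rwa [Polynomial.leadingCoeff, hdeg] at this
  have heval : ∀ r : ℤ, h.eval r = A*r^2 + B*r + C0 := by
    intro r
    conv_lhs => rw [hrep]
    simp only [eval_add, eval_mul, eval_pow, eval_C, eval_X]
    try ring
  -- the discriminant is a perfect square
  set D : ℤ := B*B - 4*(A*C0) with hD_def
  have hsq : IsSquare D := by
    apply aux_isSquare_of_forall_mod
    intro q hq
    obtain ⟨r, _, hr⟩ := H q hq
    refine ⟨2*A*r + B, ?_⟩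
    have : (2*A*r + B)^2 - D = 4*A*(h.eval r) := by rw [heval]; ring
    rw [this]
    exact Dvd.dvd.mul_left hr (4*A)
  obtain ⟨s, hDs⟩ := hsq
  -- sign normalization
  obtain ⟨σ, hσ1, hσpos⟩ : ∃ σ:ℤ, σ*σ = 1 ∧ 0 < σ*(2*A) := by
    rcases hA.lt_or_gt with hA' | hA'
    · exact ⟨-1, by ring, by linarith⟩
    · exact ⟨1, by ring, by linarith⟩
  -- lift the relations to ℤ[X]
  have hCs : C B * C B - 4*(C A * C C0) = C s * C s := by
    have h' : B*B - 4*(A*C0) = s*s := by rw [← hD_def]; exact hDs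
    have := congrArg (C : ℤ → Polynomial ℤ) h'
    simp only [map_sub, map_mul, map_ofNat] at this
    exact this
  have hCσ : C σ * C σ = 1 := by
    have := congrArg (C : ℤ → Polynomial ℤ) hσ1
    simp only [map_mul, map_one] at this
    exact this
  have hid2 : C (4*A) * h =
      (C (σ*(2*A)) * X - C (σ*(s-B))) * (C (σ*(2*A)) * X - C (σ*(-s-B))) := by
    conv_lhs => rw [hrep]
    simp only [map_mul, map_sub, map_neg, map_ofNat]
    linear_combination (-1 : Polynomial ℤ) * hCσ * (4*(C A)^2*X^2 + 4*C A*C B*X + C B*C B - C s*C s) - hCs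
  set b₁ : ℤ := σ*(2*A) with hb₁_def
  set a₁ : ℤ := σ*(s-B) with ha₁_def
  set c₁ : ℤ := σ*(-s-B) with hc₁_def
  have hb₁pos : 0 < b₁ := hσpos
  set g₁ : ℕ := Int.gcd a₁ b₁ with hg₁_def
  set g₂ : ℕ := Int.gcd c₁ b₁ with hg₂_def
  have hg₁pos : 0 < (g₁:ℤ) := by
    have : 0 < g₁ := Int.gcd_pos_iff.mpr (Or.inr hb₁pos.ne')
    exact_mod_cast this
  have hg₂pos : 0 < (g₂:ℤ) := by
    have : 0 < g₂ := Int.gcd_pos_iff.mpr (Or.inr hb₁pos.ne')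
    exact_mod_cast this
  set a : ℤ := a₁ / (g₁:ℤ) with ha_def
  set b : ℤ := b₁ / (g₁:ℤ) with hb_def
  set c : ℤ := c₁ / (g₂:ℤ) with hc_def
  set d : ℤ := b₁ / (g₂:ℤ) with hd_def2
  have hg₁a : (g₁:ℤ) * a = a₁ := Int.mul_ediv_cancel' (Int.gcd_dvd_left _ _)
  have hg₁b : (g₁:ℤ) * b = b₁ := Int.mul_ediv_cancel' (Int.gcd_dvd_right _ _)
  have hg₂c : (g₂:ℤ) * c = c₁ := Int.mul_ediv_cancel' (Int.gcd_dvd_left _ _)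
  have hg₂d : (g₂:ℤ) * d = b₁ := Int.mul_ediv_cancel' (Int.gcd_dvd_right _ _)
  have hab : Int.gcd a b = 1 := Int.gcd_div_gcd_div_gcd (by exact_mod_cast hg₁pos)
  have hcd : Int.gcd c d = 1 := Int.gcd_div_gcd_div_gcd (by exact_mod_cast hg₂pos)
  have hbpos : 0 < b := by nlinarith
  have hdpos : 0 < d := by nlinarith
  have hfac1 : C b₁ * X - C a₁ = C (g₁:ℤ) * (C b * X - C a) := by
    rw [← hg₁a, ← hg₁b, map_mul, map_mul]; ring
  have hfac2 : C b₁ * X - C c₁ = C (g₂:ℤ) * (C d * X - C c) := by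
    rw [← hg₂c, ← hg₂d, map_mul, map_mul]; ring
  set g : ℤ := (g₁:ℤ)*(g₂:ℤ) with hg_def
  have hgpos : 0 < g := mul_pos hg₁pos hg₂pos
  have hid3 : C (4*A) * h = C g * ((C b * X - C a) * (C d * X - C c)) := by
    rw [hid2, hfac1, hfac2, hg_def, map_mul]; ring
  have hPQ : (C b * X - C a) * (C d * X - C c)
      = C (b*d) * X^2 - C (b*c + a*d) * X + C (a*c) := by
    simp only [map_mul, map_add]; ring
  rw [hPQ] at hid3
  have e1 : 4*A*A = g*(b*d) := by
    have hcoef := congrArg (fun p : Polynomial ℤ => p.coeff 2) hid3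
    simp only [coeff_C_mul, coeff_add, coeff_sub, coeff_X_pow, coeff_X, coeff_C] at hcoef
    norm_num at hcoef
    linear_combination hcoef
  have e2 : 4*A*B = -(g*(b*c + a*d)) := by
    have hcoef := congrArg (fun p : Polynomial ℤ => p.coeff 1) hid3
    simp only [coeff_C_mul, coeff_add, coeff_sub, coeff_X_pow, coeff_X, coeff_C] at hcoef
    norm_num at hcoef
    linear_combination hcoef
  have e3 : 4*A*C0 = g*(a*c) := by
    have hcoef := congrArg (fun p : Polynomial ℤ => p.coeff 0) hid3
    simp only [coeff_C_mul, coeff_add, coeff_sub, coeff_X_pow, coeff_X, coeff_C] at hcoef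
    norm_num at hcoef
    linear_combination hcoef
  set G23 : ℕ := Int.gcd (b*c + a*d) (a*c) with hG23_def
  have Hprim : Int.gcd (b*d) ((G23:ℕ):ℤ) = 1 := by
    by_contra hne1
    obtain ⟨q, hq, hqdd⟩ := Nat.exists_prime_and_dvd hne1
    have hq1 : (q:ℤ) ∣ b*d := dvd_trans (Int.natCast_dvd_natCast.mpr hqdd) (Int.gcd_dvd_left _ _)
    have hq2 : (q:ℤ) ∣ ((G23:ℕ):ℤ) := dvd_trans (Int.natCast_dvd_natCast.mpr hqdd) (Int.gcd_dvd_right _ _)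
    have hq3 : (q:ℤ) ∣ b*c + a*d := dvd_trans hq2 (Int.gcd_dvd_left _ _)
    have hq4 : (q:ℤ) ∣ a*c := dvd_trans hq2 (Int.gcd_dvd_right _ _)
    rcases Int.Prime.dvd_mul' hq hq1 with hqb | hqd'
    · rcases Int.Prime.dvd_mul' hq hq4 with hqa | hqc
      · exact aux_prime_dvd_both hq hqa hqb hab
      · have hqad : (q:ℤ) ∣ a*d := by
          have h5 := dvd_sub hq3 (hqb.mul_right c)
          have h6 : b*c + a*d - b*c = a*d := by ring
          rwa [h6] at h5
        rcases Int.Prime.dvd_mul' hq hqad with hqa | hqd'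
        · exact aux_prime_dvd_both hq hqa hqb hab
        · exact aux_prime_dvd_both hq hqc hqd' hcd
    · rcases Int.Prime.dvd_mul' hq hq4 with hqa | hqc
      · have hqbc : (q:ℤ) ∣ b*c := by
          have h5 := dvd_sub hq3 (hqd'.mul_left a)
          have h6 : b*c + a*d - a*d = b*c := by ring
          rwa [h6] at h5
        rcases Int.Prime.dvd_mul' hq hqbc with hqb | hqc
        · exact aux_prime_dvd_both hq hqa hqb hab
        · exact aux_prime_dvd_both hq hqc hqd' hcd
      · exact aux_prime_dvd_both hq hqc hqd' hcd
  -- 4*A divides g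
  have hd1 : (4*A) ∣ g*(b*d) := by rw [← e1]; exact dvd_mul_right (4*A) A
  have hd2 : (4*A) ∣ g*(b*c + a*d) := by
    have : (4*A) ∣ -(g*(b*c + a*d)) := by rw [← e2]; exact dvd_mul_right (4*A) B
    exact (dvd_neg.mp this)
  have hd3 : (4*A) ∣ g*(a*c) := by rw [← e3]; exact dvd_mul_right (4*A) C0
  have hd23 : (4*A) ∣ ((Int.gcd (g*(b*c + a*d)) (g*(a*c)) : ℕ) : ℤ) := Int.dvd_coe_gcd hd2 hd3
  rw [Int.gcd_mul_left] at hd23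
  have hd23' : (4*A) ∣ g * ((G23:ℕ):ℤ) := by
    have hcast : ((g.natAbs * G23 : ℕ) : ℤ) = g * ((G23:ℕ):ℤ) := by
      push_cast
      rw [abs_of_nonneg hgpos.le]
    rwa [hcast] at hd23
  have hdg : (4*A) ∣ g := by
    have hfin : (4*A) ∣ ((Int.gcd (g*(b*d)) (g*((G23:ℕ):ℤ)) : ℕ) : ℤ) := Int.dvd_coe_gcd hd1 hd23'
    rw [Int.gcd_mul_left, Hprim] at hfin
    have hcast : ((g.natAbs * 1 : ℕ) : ℤ) = g := by
      push_cast
      rw [abs_of_nonneg hgpos.le, mul_one]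
    rwa [hcast] at hfin
  obtain ⟨e, he⟩ := hdg
  have he0 : e ≠ 0 := by rintro rfl; rw [mul_zero] at he; exact hgpos.ne' he
  have hfinal : h = C e * (C b * X - C a) * (C d * X - C c) := by
    have hc4 : (C (4*A) : Polynomial ℤ) ≠ 0 :=
      Polynomial.C_ne_zero.mpr (mul_ne_zero four_ne_zero hA)
    apply mul_left_cancel₀ hc4
    rw [hid3, he, ← hPQ, map_mul]
    ring
  have heval2 : ∀ r : ℤ, h.eval r = e*((b*r - a)*(d*r - c)) := by
    intro r
    conv_lhs => rw [hfinal]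
    simp only [eval_mul, eval_sub, eval_C, eval_X]
    ring
  have claim : ∀ p : ℕ, p.Prime → (p:ℤ) ∣ a*b → (p:ℤ) ∣ c*d → False := by
    intro p hp hpab hpcd
    set K := e.natAbs with hK_def
    have hK1 : 1 ≤ K := Nat.pos_of_ne_zero (Int.natAbs_ne_zero.mpr he0)
    obtain ⟨r, hrg, hrd⟩ := H (p^K) (pow_pos hp.pos K)
    push_cast at hrg hrd
    have hpr : ¬ (p:ℤ) ∣ r := by
      intro hdd
      exact aux_prime_dvd_both hp hdd (dvd_pow_self (p:ℤ) (by omega)) hrg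
    have hn1 : ¬ (p:ℤ) ∣ (b*r - a) := by
      intro hdd
      rcases Int.Prime.dvd_mul' hp hpab with hpa | hpb
      · have hpbr : (p:ℤ) ∣ b*r := by
          have h5 := dvd_add hdd hpa
          have h6 : b*r - a + a = b*r := by ring
          rwa [h6] at h5
        rcases Int.Prime.dvd_mul' hp hpbr with hpb | hpr'
        · exact aux_prime_dvd_both hp hpa hpb hab
        · exact hpr hpr'
      · have hpa : (p:ℤ) ∣ a := by
          have h5 := dvd_sub (hpb.mul_right r) hdd
          have h6 : b*r - (b*r - a) = a := by ring
          rwa [h6] at h5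
        exact aux_prime_dvd_both hp hpa hpb hab
    have hn2 : ¬ (p:ℤ) ∣ (d*r - c) := by
      intro hdd
      rcases Int.Prime.dvd_mul' hp hpcd with hpc | hpd
      · have hpdr : (p:ℤ) ∣ d*r := by
          have h5 := dvd_add hdd hpc
          have h6 : d*r - c + c = d*r := by ring
          rwa [h6] at h5
        rcases Int.Prime.dvd_mul' hp hpdr with hpd | hpr'
        · exact aux_prime_dvd_both hp hpc hpd hcd
        · exact hpr hpr'
      · have hpc : (p:ℤ) ∣ c := by
          have h5 := dvd_sub (hpd.mul_right r) hdd
          have h6 : d*r - (d*r - c) = c := by ring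
          rwa [h6] at h5
        exact aux_prime_dvd_both hp hpc hpd hcd
    have hcop : IsCoprime ((p:ℤ)^K) ((b*r - a)*(d*r - c)) :=
      ((aux_coprime_of_prime_not_dvd' hp hn1).mul_right
        (aux_coprime_of_prime_not_dvd' hp hn2)).pow_left
    have hpe : ((p:ℤ)^K) ∣ e := by
      apply hcop.dvd_of_dvd_mul_right
      rw [heval2 r] at hrd
      exact hrd
    have h1 : p^K ∣ e.natAbs := by
      have h2 := Int.natAbs_dvd_natAbs.mpr hpe
      simpa [Int.natAbs_pow] using h2
    have h2 : p^K ≤ e.natAbs := Nat.le_of_dvd (by omega) h1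
    have h3 : K < 2^K := Nat.lt_two_pow_self (n := K)
    have h4 : 2^K ≤ p^K := Nat.pow_le_pow_left hp.two_le K
    omega
  refine ⟨a, b, c, d, e, by linarith, by linarith, he0, hab, hcd, ?_, hfinal⟩
  by_contra hne1
  obtain ⟨q, hq, hqdd⟩ := Nat.exists_prime_and_dvd hne1
  exact claim q hq (dvd_trans (Int.natCast_dvd_natCast.mpr hqdd) (Int.gcd_dvd_left _ _))
    (dvd_trans (Int.natCast_dvd_natCast.mpr hqdd) (Int.gcd_dvd_right _ _))

/-- **Characterization of `ℙ`-intersective quadratics**: a quadratic `h ∈ ℤ[x]` is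
`ℙ`-intersective if and only if it factors as `e(bx - a)(dx - c)` with rational roots
`a/b`, `c/d` in lowest terms satisfying `gcd(ab, cd) = 1`. -/
theorem P_intersective_quadratic_iff (h : Polynomial ℤ) (hdeg : h.natDegree = 2) :
    (∀ q : ℕ, 0 < q → ∃ r : ℤ, Int.gcd r q = 1 ∧ (q : ℤ) ∣ h.eval r) ↔
    (∃ a b c d e : ℤ, 1 ≤ b ∧ 1 ≤ d ∧ e ≠ 0 ∧
      Int.gcd a b = 1 ∧ Int.gcd c d = 1 ∧ Int.gcd (a * b) (c * d) = 1 ∧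
      h = Polynomial.C e * (Polynomial.C b * Polynomial.X - Polynomial.C a) *
        (Polynomial.C d * Polynomial.X - Polynomial.C c)) := by
  constructor
  · intro H
    exact aux_forward h hdeg H
  · rintro ⟨a, b, c, d, e, hb, hd, he, hab, hcd, habcd, hrep⟩
    exact aux_converse h a b c d e hab hcd habcd hrep
end

section
/- Let h ∈ ℤ[x] and suppose there exist integers a, b, c, d with b ≥ 1, d ≥ 1, gcd(a, b) = 1, gcd(c, d) = 1, and gcd(a·b, c·d) = 1 such that h(a/b) = 0 and h(c/d) = 0. Then h is P-intersective: for every q ∈ ℕ there exists r ∈ ℤ with gcd(r, q) = 1 and q ∣ h(r). -/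
/-- Split a positive natural `q` into coprime factors `q1 * q2` with `q1` coprime to `x`
and `q2` coprime to `y`, given `x` and `y` coprime. -/
lemma coprime_split (x y : ℕ) (hxy : Nat.Coprime x y) :
    ∀ q : ℕ, 0 < q → ∃ q1 q2 : ℕ, q = q1 * q2 ∧ Nat.Coprime q1 q2 ∧
      Nat.Coprime q1 x ∧ Nat.Coprime q2 y := by
  intro q
  induction q using Nat.strong_induction_on with
  | _ q ih =>
    intro hq
    by_cases hcq : Nat.Coprime q x
    · exact ⟨q, 1, by ring, Nat.coprime_one_right q, hcq, Nat.coprime_one_left y⟩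
    · obtain ⟨p, hp, hpq, hpx⟩ := Nat.Prime.not_coprime_iff_dvd.mp hcq
      have hq0 : q ≠ 0 := hq.ne'
      set k := q.factorization p with hk
      have hkpos : 1 ≤ k := (Nat.Prime.dvd_iff_one_le_factorization hp hq0).mp hpq
      have hmul : p ^ k * (q / p ^ k) = q := Nat.ordProj_mul_ordCompl_eq_self q p
      set m := q / p ^ k with hm
      have hmpos : 0 < m := Nat.ordCompl_pos p hq0
      have hpk1 : 1 < p ^ k := one_lt_pow₀ hp.one_lt (by omega)
      have hmlt : m < q := by
        rw [hm]
        exact Nat.div_lt_self hq hpk1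
      obtain ⟨m1, m2, hmeq, hm12, hm1x, hm2y⟩ := ih m hmlt hmpos
      have hpm : ¬ p ∣ m := Nat.not_dvd_ordCompl hp hq0
      have hpm1 : ¬ p ∣ m1 := fun hd => hpm (hd.trans ⟨m2, hmeq⟩)
      have hpy : ¬ p ∣ y := fun hd =>
        Nat.Prime.one_lt hp |>.ne' (Nat.eq_one_of_dvd_coprimes hxy hpx hd)
      refine ⟨m1, p ^ k * m2, ?_, ?_, hm1x, ?_⟩
      · rw [← hmul, hmeq]; ring
      · exact Nat.Coprime.mul_right
          (Nat.Coprime.pow_right _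
            (Nat.coprime_comm.mp ((hp.coprime_iff_not_dvd).mpr hpm1))) hm12
      · exact Nat.Coprime.mul (Nat.Coprime.pow_left _
          ((Nat.Prime.coprime_iff_not_dvd hp).mpr hpy)) hm2y

/-- Local solution at a modulus coprime to `a*b`, from the rational root `a/b`. -/
lemma local_solution (h : Polynomial ℤ) (a b : ℤ) (hb : b ≠ 0)
    (hroot : Polynomial.aeval ((a : ℚ) / (b : ℚ)) h = 0)
    (m : ℕ) (hm : IsCoprime (a * b) (m : ℤ)) :
    ∃ r : ℤ, IsCoprime r (m : ℤ) ∧ (m : ℤ) ∣ h.eval r := by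
  have ha : IsCoprime a (m : ℤ) := hm.of_mul_left_left
  have hbm : IsCoprime b (m : ℤ) := hm.of_mul_left_right
  have hbm' := hbm
  obtain ⟨u, v, huv⟩ := hbm'
  refine ⟨a * u, ?_, ?_⟩
  · exact ha.mul_left ⟨b, v, by linarith⟩
  · -- key divisibility
    have hdvd1 : (m : ℤ) ∣ b * (a * u) - a := by
      have : b * (a * u) - a = a * (-(v * m)) + a * (u * b + v * (m:ℤ)) - a := by ring
      rw [this, huv]
      exact ⟨a * (-v) , by ring⟩
    set H := h.scaleRoots b with hH
    have hb' : (b : ℚ) ≠ 0 := Int.cast_ne_zero.mpr hb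
    have hHa : H.eval a = 0 := by
      have key := Polynomial.scaleRoots_eval₂_mul (Int.castRingHom ℚ) ((a : ℚ) / (b : ℚ)) b
        (p := h)
      rw [show ((Int.castRingHom ℚ) b * ((a : ℚ) / (b : ℚ))) = (Int.castRingHom ℚ) a by
          simp [mul_div_cancel₀ _ hb'],
        Polynomial.eval₂_at_apply] at key
      have : (Int.castRingHom ℚ) (H.eval a) = 0 := by
        rw [key, show Polynomial.eval₂ (Int.castRingHom ℚ) ((a : ℚ) / (b : ℚ)) h = 0 from hroot]
        ring
      simp only [Int.coe_castRingHom] at this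
      exact_mod_cast this
    have hHbr : H.eval (b * (a * u)) = b ^ h.natDegree * h.eval (a * u) := by
      have key := Polynomial.scaleRoots_eval₂_mul (RingHom.id ℤ) (a * u) b (p := h)
      simpa using key
    have hdvd2 : (m : ℤ) ∣ b ^ h.natDegree * h.eval (a * u) := by
      have := Polynomial.sub_dvd_eval_sub (b * (a * u)) a H
      rw [hHa, sub_zero, hHbr] at this
      exact dvd_trans hdvd1 this
    exact (hbm.symm.pow_right).dvd_of_dvd_mul_left hdvd2

/-- **Sufficiency of two coprime rational roots**: if `h ∈ ℤ[x]` has rational roots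
`a/b` and `c/d` in lowest terms with `gcd(ab, cd) = 1`, then `h` is `ℙ`-intersective:
for every `q ∈ ℕ` there is `r ∈ ℤ` with `gcd(r, q) = 1` and `q ∣ h(r)`. -/
theorem two_coprime_rational_roots_P_intersective
    (h : Polynomial ℤ) (a b c d : ℤ)
    (hb : 1 ≤ b) (hd : 1 ≤ d) (hab : Int.gcd a b = 1) (hcd : Int.gcd c d = 1)
    (hcop : Int.gcd (a * b) (c * d) = 1)
    (hra : Polynomial.aeval ((a : ℚ) / (b : ℚ)) h = 0)
    (hrc : Polynomial.aeval ((c : ℚ) / (d : ℚ)) h = 0) :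
    ∀ q : ℕ, 0 < q → ∃ r : ℤ, Int.gcd r q = 1 ∧ (q : ℤ) ∣ h.eval r := by
  intro q hq
  have hxy : Nat.Coprime (a * b).natAbs (c * d).natAbs := hcop
  obtain ⟨q1, q2, hqeq, h12, h1x, h2y⟩ := coprime_split _ _ hxy q hq
  -- coprimality in ℤ
  have hc1 : IsCoprime (a * b) (q1 : ℤ) := by
    rw [Int.isCoprime_iff_gcd_eq_one]
    simpa [Int.gcd] using h1x.symm
  have hc2 : IsCoprime (c * d) (q2 : ℤ) := by
    rw [Int.isCoprime_iff_gcd_eq_one]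
    simpa [Int.gcd] using h2y.symm
  obtain ⟨r1, hr1c, hr1d⟩ := local_solution h a b (by omega) hra q1 hc1
  obtain ⟨r2, hr2c, hr2d⟩ := local_solution h c d (by omega) hrc q2 hc2
  -- CRT
  have h12' : IsCoprime (q1 : ℤ) (q2 : ℤ) := by
    rw [Int.isCoprime_iff_gcd_eq_one]
    simpa [Int.gcd] using h12
  have h12'' := h12'
  obtain ⟨u, v, huv⟩ := h12''
  set r := r1 * (v * q2) + r2 * (u * q1) with hr
  have hd1 : (q1 : ℤ) ∣ r - r1 := by
    refine ⟨(r2 - r1) * u, ?_⟩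
    have : r - r1 = r1 * (u * q1 + v * q2) - r1 + (r2 - r1) * (u * q1) := by rw [hr]; ring
    rw [this, huv]; ring
  have hd2 : (q2 : ℤ) ∣ r - r2 := by
    refine ⟨(r1 - r2) * v, ?_⟩
    have : r - r2 = r2 * (u * q1 + v * q2) - r2 + (r1 - r2) * (v * q2) := by rw [hr]; ring
    rw [this, huv]; ring
  have hrc1 : IsCoprime r (q1 : ℤ) := by
    obtain ⟨k, hk⟩ := hd1
    have : r = r1 + k * q1 := by linarith
    rw [this]
    exact (IsCoprime.add_mul_right_left hr1c k)
  have hrc2 : IsCoprime r (q2 : ℤ) := by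
    obtain ⟨k, hk⟩ := hd2
    have : r = r2 + k * q2 := by linarith
    rw [this]
    exact (IsCoprime.add_mul_right_left hr2c k)
  have hdiv1 : (q1 : ℤ) ∣ h.eval r := by
    have h' := dvd_add (hd1.trans (Polynomial.sub_dvd_eval_sub r r1 h)) hr1d
    simpa using h'
  have hdiv2 : (q2 : ℤ) ∣ h.eval r := by
    have h' := dvd_add (hd2.trans (Polynomial.sub_dvd_eval_sub r r2 h)) hr2d
    simpa using h'
  refine ⟨r, ?_, ?_⟩
  · rw [← Int.isCoprime_iff_gcd_eq_one, hqeq]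
    push_cast
    exact hrc1.mul_right hrc2
  · rw [hqeq]
    push_cast
    exact h12'.mul_dvd hdiv1 hdiv2
end
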